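/- Let α, β ≥ 1 be reals with 1/α + 1/β = 1. Then for every real n ≥ 0 and all reals x, y: |x + y|^n ≤ |αx|^n + |βy|^n. Moreover, for every real p ≥ 2 and all reals x, y: |x + y|^{p−2} ≤ e·|x|^{p−2} + p^{p−2}·|y|^{p−2}, where e is Euler's number. -/

import Mathlib

lemma aux8 (a b : ℝ) (ha : 1 ≤ a) (hb : 1 ≤ b) (h : 1/a + 1/b = 1)
    (n : ℝ) (hn : 0 ≤ n) (x y : ℝ) : |x + y| ^ n ≤ |a * x| ^ n + |b * y| ^ n := by
  have ha0 : 0 < a := lt_of_lt_of_le one_pos ha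
  have hb0 : 0 < b := lt_of_lt_of_le one_pos hb
  have key : |x + y| ≤ max (a * |x|) (b * |y|) := by
    have h1 : |x + y| ≤ |x| + |y| := abs_add_le x y
    have h2 : |x| + |y| ≤ max (a * |x|) (b * |y|) := by
      have e1 : (1/a) * (a * |x|) + (1/b) * (b * |y|) = |x| + |y| := by
        field_simp
      have e2 : (1/a) * (a * |x|) + (1/b) * (b * |y|)
          ≤ (1/a) * max (a * |x|) (b * |y|) + (1/b) * max (a * |x|) (b * |y|) := by
        gcongr <;>
          first
            | positivity
            | exact le_max_left _ _
            | exact le_max_right _ _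
      have e3 : (1/a) * max (a * |x|) (b * |y|) + (1/b) * max (a * |x|) (b * |y|)
          = max (a * |x|) (b * |y|) := by rw [← add_mul, h, one_mul]
      linarith
    linarith
  have h2 : |x + y| ^ n ≤ (max (a * |x|) (b * |y|)) ^ n :=
    Real.rpow_le_rpow (abs_nonneg _) key hn
  have hmax : (max (a * |x|) (b * |y|)) ^ n ≤ (a * |x|) ^ n + (b * |y|) ^ n := by
    rcases max_cases (a * |x|) (b * |y|) with ⟨he, _⟩ | ⟨he, _⟩ <;> rw [he]
    · nlinarith [Real.rpow_nonneg (mul_nonneg hb0.le (abs_nonneg y)) n]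
    · nlinarith [Real.rpow_nonneg (mul_nonneg ha0.le (abs_nonneg x)) n]
  rw [abs_mul, abs_mul, abs_of_pos ha0, abs_of_pos hb0]
  linarith

theorem stmt8 (α β : ℝ) (hα : 1 ≤ α) (hβ : 1 ≤ β) (hconj : 1/α + 1/β = 1) :
    (∀ n : ℝ, 0 ≤ n → ∀ x y : ℝ, |x + y| ^ n ≤ |α * x| ^ n + |β * y| ^ n) ∧
    (∀ p : ℝ, 2 ≤ p → ∀ x y : ℝ,
      |x + y| ^ (p - 2) ≤
        Real.exp 1 * |x| ^ (p - 2) + p ^ (p - 2) * |y| ^ (p - 2)) := by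
  constructor
  · exact fun n hn x y => aux8 α β hα hβ hconj n hn x y
  · intro p hp x y
    have hp1 : (0:ℝ) < p - 1 := by linarith
    have hp0 : (0:ℝ) < p := by linarith
    set a : ℝ := p / (p - 1) with ha_def
    have ha1 : 1 ≤ a := by
      rw [ha_def, le_div_iff₀ hp1]; linarith
    have hconj2 : 1/a + 1/p = 1 := by
      rw [ha_def]; field_simp; ring
    have main := aux8 a p ha1 (by linarith) hconj2 (p - 2) (by linarith) x y
    have hax : |a * x| ^ (p - 2) = a ^ (p - 2) * |x| ^ (p - 2) := by
      rw [abs_mul, abs_of_pos (by linarith : (0:ℝ) < a),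
        Real.mul_rpow (by linarith) (abs_nonneg x)]
    have hpy : |p * y| ^ (p - 2) = p ^ (p - 2) * |y| ^ (p - 2) := by
      rw [abs_mul, abs_of_pos hp0, Real.mul_rpow hp0.le (abs_nonneg y)]
    have ha_e : a ^ (p - 2) ≤ Real.exp 1 := by
      have h1 : a ≤ Real.exp (1 / (p - 1)) := by
        have := Real.add_one_le_exp (1 / (p - 1))
        have : a = 1 / (p - 1) + 1 := by rw [ha_def]; field_simp; ring
        rw [this]
        exact Real.add_one_le_exp _
      have h2 : a ^ (p - 2) ≤ (Real.exp (1 / (p - 1))) ^ (p - 2) :=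
        Real.rpow_le_rpow (by linarith) h1 (by linarith)
      have h3 : (Real.exp (1 / (p - 1))) ^ (p - 2) = Real.exp ((1 / (p - 1)) * (p - 2)) := by
        rw [← Real.exp_one_rpow (1 / (p-1)), ← Real.rpow_mul (Real.exp_pos 1).le,
          Real.exp_one_rpow]
      have h4 : (1 / (p - 1)) * (p - 2) ≤ 1 := by
        rw [div_mul_eq_mul_div, one_mul, div_le_one hp1]; linarith
      calc a ^ (p - 2) ≤ Real.exp ((1 / (p - 1)) * (p - 2)) := by rw [← h3]; exact h2
        _ ≤ Real.exp 1 := Real.exp_le_exp.mpr h4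
    have hxnn : (0:ℝ) ≤ |x| ^ (p - 2) := Real.rpow_nonneg (abs_nonneg x) _
    nlinarith [main, hax, hpy]
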